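/- The rejection sampling policy built on its own reward model is optimal among all rejection sampling policies with the same base policy and sample count: for any base policy π₀ over a finite response space, sample count n, reward r₀, and prompt distribution μ, V^μ_{r₀}(π_RS(π₀, r₀, n)) = max over rewards r of V^μ_{r₀}(π_RS(π₀, r, n)). -/
import Mathlib


/-- Index of a sample achieving the maximal value of `f`. -/
noncomputable def argmaxIdx {n : ℕ} (hn : 0 < n) (f : Fin n → ℝ) : Fin n :=
  Classical.choose
    (Finset.exists_max_image (Finset.univ : Finset (Fin n)) f ⟨⟨0, hn⟩, Finset.mem_univ _⟩)

/-- Expected reward (under `reval`) of the rejection-sampling policy with base policy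
`pol0`, selection reward `rsel`, `n` i.i.d. samples, averaged over the prompt
distribution `μ`:  `V^μ_{reval}(π_RS(pol0, rsel, n))`. -/
noncomputable def RSval {X A : Type*} [Fintype X] [Fintype A]
    (μ : X → ℝ) (pol0 : X → A → ℝ) (rsel reval : X → A → ℝ) {n : ℕ} (hn : 0 < n) : ℝ :=
  ∑ x, μ x * ∑ v : Fin n → A,
    (∏ i, pol0 x (v i)) * reval x (v (argmaxIdx hn fun i => rsel x (v i)))

lemma le_argmaxIdx {n : ℕ} (hn : 0 < n) (f : Fin n → ℝ) (j : Fin n) :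
    f j ≤ f (argmaxIdx hn f) := by
  have h := Classical.choose_spec
    (Finset.exists_max_image (Finset.univ : Finset (Fin n)) f ⟨⟨0, hn⟩, Finset.mem_univ _⟩)
  exact h.2 j (Finset.mem_univ _)

/-- The rejection-sampling policy built on its own reward model is optimal
among all rejection-sampling policies with the same base policy and sample count:
`V^μ_{r₀}(π_RS(π₀, r₀, n))` is the greatest value of `r ↦ V^μ_{r₀}(π_RS(π₀, r, n))`. -/
theorem rs_self_optimal {X A : Type*} [Fintype X] [Fintype A]
    {n : ℕ} (hn : 0 < n)
    (μ : X → ℝ) (hμ0 : ∀ x, 0 ≤ μ x) (hμ1 : ∑ x, μ x = 1)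
    (pol0 : X → A → ℝ) (hp0 : ∀ x a, 0 ≤ pol0 x a) (hp1 : ∀ x, ∑ a, pol0 x a = 1)
    (r₀ : X → A → ℝ) :
    IsGreatest (Set.range fun r : X → A → ℝ => RSval μ pol0 r r₀ hn)
      (RSval μ pol0 r₀ r₀ hn) := by
  constructor
  · exact ⟨r₀, rfl⟩
  · rintro y ⟨r, rfl⟩
    unfold RSval
    refine Finset.sum_le_sum fun x _ => mul_le_mul_of_nonneg_left ?_ (hμ0 x)
    refine Finset.sum_le_sum fun v _ => mul_le_mul_of_nonneg_left ?_
      (Finset.prod_nonneg fun i _ => hp0 x (v i))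
    exact le_argmaxIdx hn (fun i => r₀ x (v i)) _
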